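/- Assume: (i) the pair (D₁, {Y_t(0)}_{t∈ℤ}) is independent of υ; and (ii) the family {Y_t(0)}_{t∈ℤ} is jointly independent of D₁ conditional on X¹. Then the pair (υ, {Y_t(0)}_{t∈ℤ}) is independent of D₁ conditional on X¹. -/

import Mathlib

open MeasureTheory ProbabilityTheory MeasurableSpace

/-- **Lemma 1(a) (Leung–Pei).** `Y0 t` is the potential-outcome process `{Y_t(0)}_{t ∈ ℤ}`, `D1`
the (binary) period-1 enrollment indicator, `υ` the idiosyncratic selection shock, and
`X¹ = (Y_{−K}(0), …, Y_0(0))` the covariate vector.  If `(D₁, {Y_t(0)}_{t∈ℤ})` is independent of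
`υ` and `{Y_t(0)}_{t∈ℤ}` is jointly independent of `D₁` conditional on `X¹`, then the pair
`(υ, {Y_t(0)}_{t∈ℤ})` is independent of `D₁` conditional on `X¹`. -/
theorem lemma_augmented_conditional_independence
    {Ω : Type*} [m0 : MeasurableSpace Ω] [StandardBorelSpace Ω] [Nonempty Ω]
    (μ : Measure Ω) [IsProbabilityMeasure μ]
    (Y0 : ℤ → Ω → ℝ) (hY0 : ∀ t, Measurable (Y0 t))
    (D1 : Ω → ℝ) (hD1meas : Measurable D1) (hD01 : ∀ ω, D1 ω = 0 ∨ D1 ω = 1)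
    (υ : Ω → ℝ) (hυmeas : Measurable υ)
    (K : ℕ)
    -- (i): (D₁, {Y_t(0)}_{t∈ℤ}) ⫫ υ
    (hindep : IndepFun (fun ω => (D1 ω, fun t : ℤ => Y0 t ω)) υ μ)
    -- (ii): {Y_t(0)}_{t∈ℤ} ⫫ D₁ | X¹, where X¹ = (Y_{−K}(0), …, Y_0(0))
    (hCI : CondIndepFun
      (MeasurableSpace.comap (fun ω => fun i : Fin (K + 1) => Y0 ((i : ℤ) - (K : ℤ)) ω)
        inferInstance)
      (Measurable.comap_le (measurable_pi_lambda _ (fun _ => hY0 _)))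
      (fun ω => fun t : ℤ => Y0 t ω) D1 μ) :
    CondIndepFun
      (MeasurableSpace.comap (fun ω => fun i : Fin (K + 1) => Y0 ((i : ℤ) - (K : ℤ)) ω)
        inferInstance)
      (Measurable.comap_le (measurable_pi_lambda _ (fun _ => hY0 _)))
      (fun ω => (υ ω, fun t : ℤ => Y0 t ω)) D1 μ := by
  classical
  -- Abbreviations
  set Yf : Ω → (ℤ → ℝ) := fun ω => fun t : ℤ => Y0 t ω with hYf_def
  have hYfmeas : Measurable Yf := measurable_pi_lambda _ fun t => hY0 t
  set X : Ω → (Fin (K + 1) → ℝ) := fun ω => fun i : Fin (K + 1) => Y0 ((i : ℤ) - (K : ℤ)) ω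
    with hX_def
  have hXmeas : Measurable X := measurable_pi_lambda _ fun i => hY0 _
  have hmX : MeasurableSpace.comap X inferInstance ≤ m0 := hXmeas.comap_le
  set W : Ω → ℝ × (ℤ → ℝ) := fun ω => (D1 ω, Yf ω) with hW_def
  have hWmeas : Measurable W := hD1meas.prodMk hYfmeas
  have hmW : MeasurableSpace.comap W inferInstance ≤ m0 := hWmeas.comap_le
  haveI : SigmaFinite (μ.trim hmW) := by infer_instance
  haveI : SigmaFinite (μ.trim hmX) := by infer_instance
  -- (MeasurableSpace.comap X inferInstance) ≤ (MeasurableSpace.comap W inferInstance)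
  have hmXW : (MeasurableSpace.comap X inferInstance) ≤ (MeasurableSpace.comap W inferInstance) := by
    have hφ : Measurable (fun p : ℝ × (ℤ → ℝ) => fun i : Fin (K + 1) => p.2 ((i : ℤ) - (K : ℤ))) :=
      measurable_pi_lambda _ fun i => (measurable_pi_apply _).comp measurable_snd
    calc (MeasurableSpace.comap X inferInstance) = MeasurableSpace.comap W
          (MeasurableSpace.comap (fun p : ℝ × (ℤ → ℝ) => fun i : Fin (K + 1) =>
            p.2 ((i : ℤ) - (K : ℤ))) inferInstance) := by
            rw [MeasurableSpace.comap_comp]; rfl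
      _ ≤ (MeasurableSpace.comap W inferInstance) := MeasurableSpace.comap_mono hφ.comap_le
  -- conditional expectation of an indicator of a υ-event given (MeasurableSpace.comap W inferInstance) is constant
  have hconst : ∀ S : Set ℝ, MeasurableSet S →
      μ[(υ ⁻¹' S).indicator (fun _ => (1 : ℝ)) | (MeasurableSpace.comap W inferInstance)] =ᵐ[μ]
        fun _ => (μ (υ ⁻¹' S)).toReal := by
    intro S hS
    have h1 : StronglyMeasurable[MeasurableSpace.comap υ inferInstance]
        ((υ ⁻¹' S).indicator (fun _ => (1 : ℝ))) :=
      stronglyMeasurable_const.indicator ⟨S, hS, rfl⟩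
    have h2 : Indep (MeasurableSpace.comap υ inferInstance)
        (MeasurableSpace.comap W inferInstance) μ :=
      (IndepFun_iff_Indep _ _ _).mp hindep.symm
    refine (condExp_indep_eq hυmeas.comap_le hmW h1 h2).trans ?_
    refine Filter.EventuallyEq.of_eq ?_
    funext ω
    simpa [Measure.real_def, Pi.one_def] using integral_indicator_one (hυmeas hS)
  -- key step: factoring out the υ-event
  have key : ∀ (S : Set ℝ) (B : Set Ω), MeasurableSet S → MeasurableSet[(MeasurableSpace.comap W inferInstance)] B →
      (μ⟦υ ⁻¹' S ∩ B | (MeasurableSpace.comap X inferInstance)⟧) =ᵐ[μ] (μ (υ ⁻¹' S)).toReal • (μ⟦B | (MeasurableSpace.comap X inferInstance)⟧) := by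
    intro S B hS hB
    have hint : Integrable ((υ ⁻¹' S).indicator (fun _ => (1 : ℝ))) μ :=
      (integrable_const _).indicator (hυmeas hS)
    have e1 : (υ ⁻¹' S ∩ B).indicator (fun _ => (1 : ℝ))
        = B.indicator ((υ ⁻¹' S).indicator (fun _ => (1 : ℝ))) := by
      rw [Set.indicator_indicator, Set.inter_comm]
    have e2 : μ[(υ ⁻¹' S ∩ B).indicator (fun _ => (1 : ℝ)) | (MeasurableSpace.comap W inferInstance)]
        =ᵐ[μ] (μ (υ ⁻¹' S)).toReal • (B.indicator (fun _ => (1 : ℝ))) := by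
      rw [e1]
      refine (condExp_indicator hint hB).trans ?_
      filter_upwards [hconst S hS] with ω hω
      by_cases hωB : ω ∈ B <;>
        simp [Set.indicator_apply, hωB, hω]
    calc (μ⟦υ ⁻¹' S ∩ B | (MeasurableSpace.comap X inferInstance)⟧)
        =ᵐ[μ] μ[μ[(υ ⁻¹' S ∩ B).indicator (fun _ => (1 : ℝ)) | (MeasurableSpace.comap W inferInstance)] | (MeasurableSpace.comap X inferInstance)] :=
          (condExp_condExp_of_le hmXW hmW).symm
      _ =ᵐ[μ] μ[(μ (υ ⁻¹' S)).toReal • (B.indicator (fun _ => (1 : ℝ))) | (MeasurableSpace.comap X inferInstance)] :=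
          condExp_congr_ae e2
      _ =ᵐ[μ] (μ (υ ⁻¹' S)).toReal • (μ⟦B | (MeasurableSpace.comap X inferInstance)⟧) := condExp_smul _ _ _
    -- note: e2 needed Set.indicator_apply of the constant
  -- product rule from hCI
  have hprod := (condIndepFun_iff_condExp_inter_preimage_eq_mul hYfmeas hD1meas).mp hCI
  -- π-systems
  set p1 : Set (Set Ω) :=
    {s | ∃ S T, MeasurableSet S ∧ MeasurableSet T ∧ s = υ ⁻¹' S ∩ Yf ⁻¹' T} with hp1_def
  set p2 : Set (Set Ω) := {s | ∃ U, MeasurableSet U ∧ s = D1 ⁻¹' U} with hp2_def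
  have hp1sys : IsPiSystem p1 := by
    rintro s ⟨S1, T1, hS1, hT1, rfl⟩ t ⟨S2, T2, hS2, hT2, rfl⟩ -
    refine ⟨S1 ∩ S2, T1 ∩ T2, hS1.inter hS2, hT1.inter hT2, ?_⟩
    simp only [Set.preimage_inter]
    ext ω; constructor <;> intro h <;> simp_all <;> tauto
  have hp2sys : IsPiSystem p2 := by
    rintro s ⟨U1, hU1, rfl⟩ t ⟨U2, hU2, rfl⟩ -
    exact ⟨U1 ∩ U2, hU1.inter hU2, (Set.preimage_inter).symm⟩
  have hp1m : ∀ s ∈ p1, MeasurableSet s := by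
    rintro s ⟨S, T, hS, hT, rfl⟩
    exact (hυmeas hS).inter (hYfmeas hT)
  have hp2m : ∀ s ∈ p2, MeasurableSet s := by
    rintro s ⟨U, hU, rfl⟩
    exact hD1meas hU
  -- generating the σ-algebras
  have hpm1 : MeasurableSpace.comap (fun ω => (υ ω, Yf ω)) inferInstance
      = MeasurableSpace.generateFrom p1 := by
    have hsup : (MeasurableSpace.comap (fun ω => (υ ω, Yf ω)) inferInstance : MeasurableSpace Ω)
        = MeasurableSpace.comap υ inferInstance ⊔ MeasurableSpace.comap Yf inferInstance := by
      rw [show (inferInstance : MeasurableSpace (ℝ × (ℤ → ℝ)))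
          = MeasurableSpace.comap Prod.fst inferInstance
            ⊔ MeasurableSpace.comap Prod.snd inferInstance from rfl,
        MeasurableSpace.comap_sup, MeasurableSpace.comap_comp, MeasurableSpace.comap_comp]
      rfl
    rw [hsup]
    apply le_antisymm
    · refine sup_le ?_ ?_
      · rintro s ⟨S, hS, rfl⟩
        exact MeasurableSpace.measurableSet_generateFrom ⟨S, Set.univ, hS, MeasurableSet.univ,
          by simp⟩
      · rintro s ⟨T, hT, rfl⟩
        exact MeasurableSpace.measurableSet_generateFrom ⟨Set.univ, T, MeasurableSet.univ, hT,
          by simp⟩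
    · refine MeasurableSpace.generateFrom_le ?_
      rintro s ⟨S, T, hS, hT, rfl⟩
      exact MeasurableSet.inter
        ((le_sup_left : MeasurableSpace.comap υ inferInstance ≤ _) _ ⟨S, hS, rfl⟩)
        ((le_sup_right : MeasurableSpace.comap Yf inferInstance ≤ _) _ ⟨T, hT, rfl⟩)
  have hpm2 : MeasurableSpace.comap D1 inferInstance = MeasurableSpace.generateFrom p2 := by
    apply le_antisymm
    · rintro s ⟨U, hU, rfl⟩
      exact MeasurableSpace.measurableSet_generateFrom ⟨U, hU, rfl⟩
    · refine MeasurableSpace.generateFrom_le ?_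
      rintro s ⟨U, hU, rfl⟩
      exact ⟨U, hU, rfl⟩
  -- the CondIndepSets statement
  have hyp : CondIndepSets (MeasurableSpace.comap X inferInstance) hmX p1 p2 μ := by
    rw [condIndepSets_iff _ _ _ _ hp1m hp2m]
    rintro t1 t2 ⟨S, T, hS, hT, rfl⟩ ⟨U, hU, rfl⟩
    have hYT : MeasurableSet[(MeasurableSpace.comap W inferInstance)] (Yf ⁻¹' T) :=
      ⟨Set.univ ×ˢ T, MeasurableSet.univ.prod hT, by ext ω; simp [hW_def]⟩
    have hDU : MeasurableSet[(MeasurableSpace.comap W inferInstance)] (D1 ⁻¹' U) :=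
      ⟨U ×ˢ Set.univ, hU.prod MeasurableSet.univ, by ext ω; simp [hW_def]⟩
    have h1 := key S (Yf ⁻¹' T ∩ D1 ⁻¹' U) hS (hYT.inter hDU)
    have h2 := key S (Yf ⁻¹' T) hS hYT
    have h3 := hprod T U hT hU
    have hassoc : υ ⁻¹' S ∩ Yf ⁻¹' T ∩ D1 ⁻¹' U = υ ⁻¹' S ∩ (Yf ⁻¹' T ∩ D1 ⁻¹' U) :=
      Set.inter_assoc _ _ _
    rw [hassoc]
    filter_upwards [h1, h2, h3] with ω h1 h2 h3
    simp only [Pi.mul_apply, Pi.smul_apply, smul_eq_mul] at h1 h2 h3 ⊢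
    rw [h1, h3, h2]
    ring
  -- put everything together
  rw [condIndepFun_iff_condIndep]
  exact CondIndepSets.condIndep ((hυmeas.prodMk hYfmeas).comap_le) hD1meas.comap_le
    hp1sys hp2sys hpm1 hpm2 hyp
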